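/- Let s be a simple Lie algebra over an arbitrary field F, let x ∈ s be nonzero, and let f : s → s be a linear map with f(x) = x and image equal to the line F·x. Let A = F·d ⊕ s be the anticommutative algebra extending the bracket of s by [d,d] = 0 and [d,u] = f(u) = −[u,d] for all u ∈ s. Then the only ideals of A (subspaces I with [I,A] ⊆ I) are 0, s, and A; in particular s is the unique proper nontrivial ideal of A, it is a simple ideal of codimension 1, and A is semisimple (has no nonzero solvable ideal). -/

import Mathlib

/-- The derived series of a subspace `I` of an anticommutative algebra with
multiplication `br`. -/
def derSeries (F : Type*) [Field F] (V : Type*) [AddCommGroup V] [Module F V]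
    (br : V → V → V) (I : Submodule F V) : ℕ → Submodule F V
  | 0 => I
  | k + 1 => Submodule.span F
      {z : V | ∃ u ∈ derSeries F V br I k, ∃ v ∈ derSeries F V br I k, br u v = z}

lemma derSeries_mono {F : Type*} [Field F] {V : Type*} [AddCommGroup V] [Module F V]
    (br : V → V → V) {I I' : Submodule F V} (h : I ≤ I') (k : ℕ) :
    derSeries F V br I k ≤ derSeries F V br I' k := by
  induction k with
  | zero => exact h
  | succ k ih =>
    apply Submodule.span_mono
    rintro z ⟨u, hu, v, hv, rfl⟩
    exact ⟨u, ih hu, v, ih hv, rfl⟩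

lemma span_brackets_eq_top (F : Type*) [Field F] (s : Type*) [LieRing s] [LieAlgebra F s]
    [LieAlgebra.IsSimple F s] :
    Submodule.span F {z : s | ∃ u v : s, ⁅u, v⁆ = z} = ⊤ := by
  rcases LieAlgebra.IsSimple.eq_bot_or_eq_top (⁅(⊤ : LieIdeal F s), (⊤ : LieIdeal F s)⁆) with h | h
  · exfalso
    apply LieAlgebra.IsSimple.non_abelian (R := F) (L := s)
    constructor
    intro a b
    have hab : (⁅a, b⁆ : s) ∈ (⁅(⊤ : LieIdeal F s), (⊤ : LieIdeal F s)⁆ : LieIdeal F s) :=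
      LieSubmodule.lie_mem_lie (LieSubmodule.mem_top _) (LieSubmodule.mem_top _)
    rw [h] at hab
    simpa using hab
  · have h2 : ((⁅(⊤ : LieIdeal F s), (⊤ : LieIdeal F s)⁆ : LieSubmodule F s s) : Submodule F s)
        = (⊤ : Submodule F s) := by rw [h]; rfl
    rw [LieIdeal.toLieSubalgebra_toSubmodule, LieSubmodule.lieIdeal_oper_eq_linear_span'] at h2
    rw [← h2]
    congr 1
    ext z
    constructor
    · rintro ⟨u, v, rfl⟩; exact ⟨u, LieSubmodule.mem_top _, v, LieSubmodule.mem_top _, rfl⟩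
    · rintro ⟨u, _, v, _, rfl⟩; exact ⟨u, v, rfl⟩

lemma classify15 (F : Type*) [Field F]
    (s : Type*) [LieRing s] [LieAlgebra F s] [LieAlgebra.IsSimple F s]
    (x : s) (hx : x ≠ 0)
    (f : s →ₗ[F] s) (hfx : f x = x) (hran : LinearMap.range f = Submodule.span F {x})
    (I : Submodule F (F × s))
    (hI : ∀ v ∈ I, ∀ w : F × s, ((0 : F), v.1 • f w.2 - w.1 • f v.2 + ⁅v.2, w.2⁆) ∈ I) :
    I = ⊥ ∨ I = Submodule.prod (⊥ : Submodule F F) (⊤ : Submodule F s) ∨ I = ⊤ := by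
  set J : LieIdeal F s :=
    { carrier := {u : s | ((0 : F), u) ∈ I}
      add_mem' := by
        intro a b ha hb
        have := I.add_mem ha hb
        simpa using this
      zero_mem' := by exact I.zero_mem
      smul_mem' := by
        intro c u hu
        have := I.smul_mem c hu
        simpa [Prod.smul_mk] using this
      lie_mem := by
        intro y u hu
        have h1 := hI ((0 : F), u) hu ((0 : F), y)
        simp only [zero_smul, sub_zero, zero_add, zero_sub, neg_zero] at h1
        have h2 := I.neg_mem h1
        simp only [Prod.neg_mk, neg_zero, neg_neg, ← lie_skew u y] at h2
        exact h2 } with hJdef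
  rcases LieAlgebra.IsSimple.eq_bot_or_eq_top J with hJ | hJ
  · -- J = ⊥ : show I = ⊥
    left
    have hz : ∀ v : s, ((0 : F), v) ∈ I → v = 0 := by
      intro v hv
      have : v ∈ J := hv
      rw [hJ] at this
      simpa using this
    rw [eq_bot_iff]
    intro p hp
    by_cases ha : p.1 = 0
    · have : p = ((0 : F), p.2) := by rw [← ha]
      rw [this] at hp
      have := hz p.2 hp
      simp [Submodule.mem_bot, Prod.ext_iff, ha, this]
    · exfalso
      have key : ∀ v : s, ⁅p.2, v⁆ = -(p.1 • f v) := by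
        intro v
        have h1 := hI p hp ((0 : F), v)
        simp only [zero_smul, sub_zero] at h1
        have h2 := hz _ h1
        exact eq_neg_of_add_eq_zero_right h2
      have hux : ⁅p.2, x⁆ = -(p.1 • x) := by rw [key x, hfx]
      have hstep : ∀ v : s, ⁅v, x⁆ = f ⁅v, x⁆ := by
        intro v
        have hj : ⁅p.2, ⁅v, x⁆⁆ = ⁅⁅p.2, v⁆, x⁆ + ⁅v, ⁅p.2, x⁆⁆ := leibniz_lie _ _ _
        have hfv : f v ∈ Submodule.span F {x} := by
          rw [← hran]; exact ⟨v, rfl⟩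
        obtain ⟨c, hc⟩ := Submodule.mem_span_singleton.mp hfv
        rw [key ⁅v, x⁆, key v, hux, ← hc] at hj
        simp only [neg_lie, smul_lie, lie_smul, smul_neg, lie_self, smul_zero, neg_zero,
          zero_add, lie_neg, neg_neg, neg_inj] at hj
        -- hj : p.1 • f ⁅v, x⁆ = p.1 • ⁅v, x⁆  (hopefully)
        have := smul_right_injective s ha (hj.trans rfl)
        exact this.symm
      have hmem : ∀ v : s, ⁅v, x⁆ ∈ Submodule.span F {x} := by
        intro v
        rw [hstep v, ← hran]
        exact ⟨⁅v, x⁆, rfl⟩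
      set K : LieIdeal F s :=
        { Submodule.span F {x} with
          lie_mem := by
            intro y m hm
            obtain ⟨c, rfl⟩ := Submodule.mem_span_singleton.mp hm
            have : ⁅y, c • x⁆ = c • ⁅y, x⁆ := lie_smul c y x
            show ⁅y, c • x⁆ ∈ Submodule.span F {x}
            rw [this]
            exact Submodule.smul_mem _ c (hmem y) } with hKdef
      rcases LieAlgebra.IsSimple.eq_bot_or_eq_top K with hK | hK
      · have hxK : x ∈ K := Submodule.mem_span_singleton_self x
        rw [hK] at hxK
        exact hx (by simpa using hxK)
      · apply LieAlgebra.IsSimple.non_abelian (R := F) (L := s)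
        constructor
        intro a b
        have haK : a ∈ K := by rw [hK]; exact LieSubmodule.mem_top _
        have hbK : b ∈ K := by rw [hK]; exact LieSubmodule.mem_top _
        obtain ⟨c, hc⟩ := Submodule.mem_span_singleton.mp haK
        obtain ⟨d, hd⟩ := Submodule.mem_span_singleton.mp hbK
        rw [← hc, ← hd]
        simp
  · -- J = ⊤
    have hall : ∀ u : s, ((0 : F), u) ∈ I := by
      intro u
      have : u ∈ J := by rw [hJ]; exact LieSubmodule.mem_top _
      exact this
    by_cases hex : ∃ p ∈ I, p.1 ≠ 0
    · right; right
      obtain ⟨p, hp, hp1⟩ := hex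
      rw [eq_top_iff]
      intro q _
      have h1 : (p.1, (0 : s)) ∈ I := by
        have hsub := I.sub_mem hp (hall p.2)
        have he : p - ((0 : F), p.2) = (p.1, (0 : s)) := by
          simp [Prod.ext_iff]
        rwa [he] at hsub
      have h2 : (q.1, (0 : s)) ∈ I := by
        have := I.smul_mem (q.1 / p.1) h1
        simpa [Prod.smul_mk, div_mul_cancel₀ _ hp1, smul_eq_mul] using this
      have := I.add_mem h2 (hall q.2)
      simpa using this
    · right; left
      push_neg at hex
      ext q
      simp only [Submodule.mem_prod, Submodule.mem_bot, Submodule.mem_top, and_true]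
      constructor
      · exact fun hq => hex q hq
      · intro hq
        have : q = ((0 : F), q.2) := by rw [← hq]
        rw [this]
        exact hall q.2

lemma der_ge15 (F : Type*) [Field F]
    (s : Type*) [LieRing s] [LieAlgebra F s] [LieAlgebra.IsSimple F s]
    (f : s →ₗ[F] s) (k : ℕ) :
    Submodule.prod (⊥ : Submodule F F) (⊤ : Submodule F s) ≤
      derSeries F (F × s) (fun p q => ((0 : F), p.1 • f q.2 - q.1 • f p.2 + ⁅p.2, q.2⁆))
        (Submodule.prod ⊥ ⊤) k := by
  induction k with
  | zero => exact le_rfl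
  | succ k ih =>
    intro p hp
    rcases Submodule.mem_prod.mp hp with ⟨hp1, -⟩
    rw [Submodule.mem_bot] at hp1
    have hp' : p = ((0 : F), p.2) := by rw [← hp1]
    rw [hp']
    have hw : ∀ w : s, ((0 : F), w) ∈ derSeries F (F × s)
        (fun p q => ((0 : F), p.1 • f q.2 - q.1 • f p.2 + ⁅p.2, q.2⁆))
        (Submodule.prod ⊥ ⊤) (k + 1) := by
      intro w
      have hw' : w ∈ Submodule.span F {z : s | ∃ u v : s, ⁅u, v⁆ = z} := by
        rw [span_brackets_eq_top F s]; trivial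
      induction hw' using Submodule.span_induction with
      | mem z hz =>
        obtain ⟨u, v, rfl⟩ := hz
        apply Submodule.subset_span
        refine ⟨((0 : F), u), ih (Submodule.mem_prod.mpr ⟨rfl, trivial⟩),
          ((0 : F), v), ih (Submodule.mem_prod.mpr ⟨rfl, trivial⟩), ?_⟩
        simp
      | zero => exact Submodule.zero_mem _
      | add a b _ _ hA hB =>
        have := Submodule.add_mem _ hA hB
        simpa using this
      | smul c a _ hA =>
        have := Submodule.smul_mem _ c hA
        simpa [Prod.smul_mk] using this
    exact hw p.2

/-- Let `s` be a simple Lie algebra, `x ∈ s` nonzero, and `f : s → s`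
linear with `f(x) = x` and range `F·x`.  The extension `A = F·d ⊕ s` with
`[d, u] = f(u) = −[u, d]` has only the ideals `0`, `s`, `A`; in particular `s` is the
unique proper nontrivial ideal (a simple ideal of codimension 1) and `A` is semisimple:
it has no nonzero solvable ideal. -/
theorem stmt15 (F : Type*) [Field F]
    (s : Type*) [LieRing s] [LieAlgebra F s] [LieAlgebra.IsSimple F s]
    (x : s) (hx : x ≠ 0)
    (f : s →ₗ[F] s) (hfx : f x = x) (hran : LinearMap.range f = Submodule.span F {x}) :
    letI br : (F × s) → (F × s) → (F × s) :=
      fun p q => (0, p.1 • f q.2 - q.1 • f p.2 + ⁅p.2, q.2⁆)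
    (∀ I : Submodule F (F × s), (∀ v ∈ I, ∀ w : F × s, br v w ∈ I) →
        I = ⊥ ∨ I = Submodule.prod (⊥ : Submodule F F) (⊤ : Submodule F s) ∨ I = ⊤) ∧
    (∀ I : Submodule F (F × s), (∀ v ∈ I, ∀ w : F × s, br v w ∈ I) →
        (∃ k : ℕ, derSeries F (F × s) br I k = ⊥) → I = ⊥) := by
  constructor
  · intro I hI
    exact classify15 F s x hx f hfx hran I hI
  · intro I hI ⟨k, hk⟩
    rcases classify15 F s x hx f hfx hran I hI with h | h | h
    · exact h
    all_goals {
      exfalso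
      have hle : Submodule.prod (⊥ : Submodule F F) (⊤ : Submodule F s) ≤ I := by
        rw [h]
        try exact le_top
      have h1 := der_ge15 F s f k
      have h2 := derSeries_mono
        (fun p q : F × s => ((0 : F), p.1 • f q.2 - q.1 • f p.2 + ⁅p.2, q.2⁆)) hle k
      have h3 : ((0 : F), x) ∈ (⊥ : Submodule F (F × s)) := by
        rw [← hk]
        exact h2 (h1 (Submodule.mem_prod.mpr ⟨rfl, trivial⟩))
      rw [Submodule.mem_bot] at h3
      exact hx (by simpa [Prod.ext_iff] using h3)
    }
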